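/- Let R be a reduced commutative ring, M a finitely generated projective R-module, and φ an R-linear endomorphism of M. Suppose that the set of primes p ∈ Spec R for which the induced endomorphism φ ⊗ id on the fiber M ⊗_R κ(p) is zero (where κ(p) denotes the residue field of the local ring R_p) is dense in Spec R with the Zariski topology. Then φ = 0. -/

import Mathlib

/-- An endomorphism of a finite projective module over a reduced commutative ring which
vanishes on the fibers `M ⊗ κ(p)` over a Zariski dense set of primes `p` is zero. -/
theorem endomorphism_eq_zero_of_fiberwise_zero_on_dense
    {R : Type*} [CommRing R] [IsReduced R]
    {M : Type*} [AddCommGroup M] [Module R M] [Module.Finite R M] [Module.Projective R M]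
    (φ : M →ₗ[R] M)
    (hdense : Dense {p : PrimeSpectrum R |
      LinearMap.baseChange (IsLocalRing.ResidueField (Localization.AtPrime p.asIdeal)) φ = 0}) :
    φ = 0 := by
  ext m
  simp only [LinearMap.zero_apply]
  suffices h : ∀ f : M →ₗ[R] R, f (φ m) = 0 by
    obtain ⟨s, hs⟩ := Module.projective_def.mp ‹Module.Projective R M›
    have hsz : s (φ m) = 0 := by
      ext i
      exact h ((Finsupp.lapply i).comp s)
    have := hs (φ m)
    rw [hsz] at this
    simpa using this.symm
  intro f
  set a := f (φ m) with ha
  -- a lies in every prime ideal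
  have hmem : ∀ p : PrimeSpectrum R, a ∈ p.asIdeal := by
    have hclosed : IsClosed (PrimeSpectrum.zeroLocus ({a} : Set R)) :=
      PrimeSpectrum.isClosed_zeroLocus _
    have hsub : {p : PrimeSpectrum R |
        LinearMap.baseChange (IsLocalRing.ResidueField (Localization.AtPrime p.asIdeal)) φ = 0}
        ⊆ PrimeSpectrum.zeroLocus ({a} : Set R) := by
      intro p hp
      set κ := IsLocalRing.ResidueField (Localization.AtPrime p.asIdeal)
      have h1 : (LinearMap.baseChange κ φ) (1 ⊗ₜ[R] m) = 0 := by rw [hp]; rfl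
      have h2 : (1 : κ) ⊗ₜ[R] (φ m) = 0 := by
        simpa using h1
      have h3 : (LinearMap.baseChange κ f) ((1 : κ) ⊗ₜ[R] (φ m)) = 0 := by
        rw [h2]; simp
      have h4 : (1 : κ) ⊗ₜ[R] a = (0 : TensorProduct R κ R) := by simpa using h3
      have h6 : algebraMap R κ a = 0 := by
        have h5 : (TensorProduct.rid R κ) ((1 : κ) ⊗ₜ[R] a)
            = (TensorProduct.rid R κ) 0 := congrArg _ h4
        rw [LinearEquiv.map_zero, TensorProduct.rid_tmul] at h5
        rwa [Algebra.algebraMap_eq_smul_one]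
      -- kernel of R → κ(p) is p
      have h7 : algebraMap R (Localization.AtPrime p.asIdeal) a ∈
          IsLocalRing.maximalIdeal (Localization.AtPrime p.asIdeal) := by
        rw [← IsLocalRing.residue_eq_zero_iff]
        have : (IsLocalRing.residue (Localization.AtPrime p.asIdeal))
            (algebraMap R (Localization.AtPrime p.asIdeal) a) = algebraMap R κ a := by
          rw [IsScalarTower.algebraMap_apply R (Localization.AtPrime p.asIdeal) κ,
            IsLocalRing.ResidueField.algebraMap_eq]
        rw [this, h6]
      have h8 : a ∈ (IsLocalRing.maximalIdeal
          (Localization.AtPrime p.asIdeal)).comap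
          (algebraMap R (Localization.AtPrime p.asIdeal)) := h7
      rw [← Ideal.under_def, Localization.AtPrime.comap_maximalIdeal] at h8
      simpa [PrimeSpectrum.mem_zeroLocus] using h8
    have : closure {p : PrimeSpectrum R |
        LinearMap.baseChange (IsLocalRing.ResidueField (Localization.AtPrime p.asIdeal)) φ = 0}
        ⊆ PrimeSpectrum.zeroLocus ({a} : Set R) := hclosed.closure_subset_iff.mpr hsub
    intro p
    have hp : p ∈ PrimeSpectrum.zeroLocus ({a} : Set R) := this (hdense p)
    simpa [PrimeSpectrum.mem_zeroLocus] using hp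
  -- hence a is nilpotent, hence zero
  have : a ∈ nilradical R := by
    rw [nilradical_eq_sInf]
    exact Ideal.mem_sInf.mpr fun {J} hJ => hmem ⟨J, hJ⟩
  rw [nilradical_eq_zero] at this
  exact this
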